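/- Under the Weierstrass decomposition hypothesis, an initial condition Y_0 ∈ ℂ^m is consistent — that is, there exists a solution (Y_k)_{k≥0} of F Y_{k+1} = G Y_k whose term at k = 0 equals Y_0 — if and only if Y_0 lies in the column span of Q_p. -/

import Mathlib

open Matrix Filter Topology

noncomputable section

/-- Euclidean (ℓ²) norm on ℂ-vectors indexed by a finite type. -/
def euclNorm {n : Type*} [Fintype n] (v : n → ℂ) : ℝ :=
  ‖(WithLp.equiv 2 (n → ℂ)).symm v‖

/-- Operator norm of a matrix, induced by the Euclidean norms. -/
def matOpNorm {α β : Type*} [Fintype α] [Fintype β] [DecidableEq β]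
    (A : Matrix α β ℂ) : ℝ :=
  ‖LinearMap.toContinuousLinearMap (Matrix.toEuclideanLin A)‖
/-- Proposition 2.1: the initial condition `Y₀` is consistent (some solution of
`F Y_{k+1} = G Y_k` starts at `Y₀`) iff `Y₀` lies in the column span of `Q_p`. -/
theorem consistent_iff_colspan (p q : ℕ) (hp : 1 ≤ p)
    (F G P Q : Matrix (Fin p ⊕ Fin q) (Fin p ⊕ Fin q) ℂ)
    (J : Matrix (Fin p) (Fin p) ℂ) (H : Matrix (Fin q) (Fin q) ℂ)
    (hP : IsUnit P) (hQ : IsUnit Q) (hH : IsNilpotent H)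
    (hF : P * F * Q = Matrix.fromBlocks 1 0 0 H)
    (hG : P * G * Q = Matrix.fromBlocks J 0 0 1)
    (Qp : Matrix (Fin p ⊕ Fin q) (Fin p) ℂ)
    (hQp : Qp = Q.submatrix id Sum.inl)
    (Y0 : (Fin p ⊕ Fin q) → ℂ) :
    (∃ Y : ℕ → (Fin p ⊕ Fin q) → ℂ,
        (∀ k : ℕ, F.mulVec (Y (k + 1)) = G.mulVec (Y k)) ∧ Y 0 = Y0) ↔
      Y0 ∈ Submodule.span ℂ (Set.range Qpᵀ) := by
  obtain ⟨iP⟩ := hP.nonempty_invertible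
  obtain ⟨iQ⟩ := hQ.nonempty_invertible
  obtain ⟨n, hn⟩ := hH
  have key : ∀ c : Fin p → ℂ, Q.mulVec (Sum.elim c 0) = Qp.mulVec c := by
    intro c
    funext r
    simp [hQp, Matrix.mulVec, dotProduct, Fintype.sum_sum_type,
      Matrix.submatrix_apply]
  rw [show Set.range Qpᵀ = Set.range Qp.col from rfl, ← Matrix.range_mulVecLin]
  constructor
  · rintro ⟨Y, hY, hY0⟩
    set Z : ℕ → (Fin p ⊕ Fin q) → ℂ := fun k => (⅟Q).mulVec (Y k) with hZ
    have hYZ : ∀ k, Y k = Q.mulVec (Z k) := by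
      intro k
      rw [hZ]
      show Y k = Q *ᵥ (⅟Q *ᵥ Y k)
      rw [Matrix.mulVec_mulVec, mul_invOf_self, Matrix.one_mulVec]
    have hblock : ∀ k,
        (Matrix.fromBlocks (1 : Matrix (Fin p) (Fin p) ℂ) 0 0 H).mulVec (Z (k+1))
        = (Matrix.fromBlocks J 0 0 (1 : Matrix (Fin q) (Fin q) ℂ)).mulVec (Z k) := by
      intro k
      have h1 : (P * F * Q).mulVec (Z (k+1)) = P.mulVec (F.mulVec (Y (k+1))) := by
        show (P * F * Q) *ᵥ (⅟Q *ᵥ Y (k+1)) = _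
        rw [Matrix.mulVec_mulVec, mul_invOf_cancel_right, ← Matrix.mulVec_mulVec]
      have h2 : (P * G * Q).mulVec (Z k) = P.mulVec (G.mulVec (Y k)) := by
        show (P * G * Q) *ᵥ (⅟Q *ᵥ Y k) = _
        rw [Matrix.mulVec_mulVec, mul_invOf_cancel_right, ← Matrix.mulVec_mulVec]
      rw [← hF, ← hG, h1, h2, hY k]
    have hv : ∀ k, (Z k) ∘ Sum.inr = H.mulVec ((Z (k+1)) ∘ Sum.inr) := by
      intro k
      have h := hblock k
      rw [Matrix.fromBlocks_mulVec, Matrix.fromBlocks_mulVec] at h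
      have := congrArg (fun f => f ∘ Sum.inr) h
      simpa using this.symm
    have hv0 : ∀ j : ℕ, (Z 0) ∘ Sum.inr = (H ^ j).mulVec ((Z j) ∘ Sum.inr) := by
      intro j
      induction j with
      | zero => simp
      | succ j ih =>
        rw [ih, hv j, Matrix.mulVec_mulVec, ← pow_succ]
    have hZ0 : (Z 0) ∘ Sum.inr = 0 := by
      rw [hv0 n, hn, Matrix.zero_mulVec]
    refine ⟨(Z 0) ∘ Sum.inl, ?_⟩
    have : Z 0 = Sum.elim ((Z 0) ∘ Sum.inl) 0 := by
      rw [← hZ0]; exact (Sum.elim_comp_inl_inr (Z 0)).symm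
    rw [Matrix.mulVecLin_apply, ← key, ← this, ← hYZ 0, hY0]
  · rintro ⟨c, hc⟩
    rw [Matrix.mulVecLin_apply] at hc
    refine ⟨fun k => Q.mulVec (Sum.elim ((J ^ k).mulVec c) 0), ?_, ?_⟩
    · intro k
      have hcancel : ∀ a b : (Fin p ⊕ Fin q) → ℂ,
          P.mulVec a = P.mulVec b → a = b := by
        intro a b hab
        have := congrArg (⅟P).mulVec hab
        simpa [Matrix.mulVec_mulVec, invOf_mul_self] using this
      apply hcancel
      have hL : P.mulVec (F.mulVec (Q.mulVec (Sum.elim ((J ^ (k+1)).mulVec c) 0)))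
          = (P * F * Q).mulVec (Sum.elim ((J ^ (k+1)).mulVec c) 0) := by
        rw [Matrix.mulVec_mulVec, Matrix.mulVec_mulVec]
      have hR : P.mulVec (G.mulVec (Q.mulVec (Sum.elim ((J ^ k).mulVec c) 0)))
          = (P * G * Q).mulVec (Sum.elim ((J ^ k).mulVec c) 0) := by
        rw [Matrix.mulVec_mulVec, Matrix.mulVec_mulVec]
      rw [hL, hR, hF, hG, Matrix.fromBlocks_mulVec, Matrix.fromBlocks_mulVec]
      simp [Matrix.mulVec_mulVec, ← pow_succ']
    · simp only [pow_zero, Matrix.one_mulVec, key, hc]
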